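/- arXiv:2508.11006 — 2 statements merged into one kernel-verified Lean document; each statement's English description precedes it below -/
import Mathlib

section
/- Let C ≥ 4 and ε > 0 with n√C ≤ 2^{C^ε}. With w₀ = 2^{C^ε}, the sum over j from 0 to C^ε - log₂ n - (log₂ C)/2 of the quantity 2 n² (2^j / w₀)² / (1 - n 2^j / w₀) is at most 8/C. -/
/-- The sum of per-slot collision probabilities accumulated during the halving phase:
with `w₀ = 2^(C^ε)` and `n √C ≤ w₀`, for any natural `N` with
`N ≤ C^ε - log₂ n - (log₂ C)/2`, we have
`∑_{j=0}^{N} 2 n² (2^j / w₀)² / (1 - n 2^j / w₀) ≤ 8 / C`. -/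
theorem halving_phase_collision_sum (C ε n : ℝ) (hC : 4 ≤ C) (hε : 0 < ε)
    (hn : 1 ≤ n) (hgood : n * Real.sqrt C ≤ (2 : ℝ) ^ (C ^ ε)) (N : ℕ)
    (hN : (N : ℝ) ≤ C ^ ε - Real.logb 2 n - Real.logb 2 C / 2) :
    ∑ j ∈ Finset.range (N + 1),
      2 * n ^ 2 * ((2 : ℝ) ^ j / (2 : ℝ) ^ (C ^ ε)) ^ 2 /
        (1 - n * (2 : ℝ) ^ j / (2 : ℝ) ^ (C ^ ε)) ≤ 8 / C := by
  set w : ℝ := (2 : ℝ) ^ (C ^ ε) with hw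
  have hw0 : 0 < w := Real.rpow_pos_of_pos two_pos _
  have hC0 : (0 : ℝ) < C := by linarith
  have hn0 : (0 : ℝ) < n := by linarith
  have hsC0 : 0 < Real.sqrt C := Real.sqrt_pos.mpr hC0
  have hsC2 : (2 : ℝ) ≤ Real.sqrt C := by
    nlinarith [Real.sq_sqrt hC0.le, Real.sqrt_nonneg C]
  -- key bound : n * 2^N ≤ w / √C
  have h3 : (2 : ℝ) ^ (C ^ ε - Real.logb 2 n - Real.logb 2 C / 2)
      = w / (n * Real.sqrt C) := by
    rw [Real.rpow_sub two_pos, Real.rpow_sub two_pos,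
      Real.rpow_logb two_pos (by norm_num) hn0,
      show Real.logb 2 C / 2 = Real.logb 2 C * (2⁻¹ : ℝ) by ring,
      Real.rpow_mul (by norm_num), Real.rpow_logb two_pos (by norm_num) hC0,
      show ((2:ℝ)⁻¹:ℝ) = ((1:ℝ)/2) by norm_num, ← Real.sqrt_eq_rpow, div_div]
  have h2 : (2 : ℝ) ^ (N : ℕ) ≤ w / (n * Real.sqrt C) := by
    have := Real.rpow_le_rpow_of_exponent_le one_le_two hN
    rwa [Real.rpow_natCast, h3] at this
  have hkey : n * 2 ^ N / w ≤ 1 / Real.sqrt C := by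
    rw [div_le_div_iff₀ hw0 hsC0]
    have := (le_div_iff₀ (by positivity)).mp h2
    nlinarith [pow_pos (two_pos (α := ℝ)) N]
  have hhalf : ∀ j ∈ Finset.range (N + 1), n * 2 ^ j / w ≤ 1 / Real.sqrt C := by
    intro j hj
    refine le_trans ?_ hkey
    have : (2 : ℝ) ^ j ≤ 2 ^ N :=
      pow_le_pow_right₀ one_le_two (Nat.lt_succ_iff.mp (Finset.mem_range.mp hj))
    gcongr
  have hterm : ∀ j ∈ Finset.range (N + 1),
      2 * n ^ 2 * ((2 : ℝ) ^ j / w) ^ 2 / (1 - n * (2 : ℝ) ^ j / w)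
        ≤ 4 / Real.sqrt C * (n * 2 ^ j / w) := by
    intro j hj
    have hx : n * 2 ^ j / w ≤ 1 / Real.sqrt C := hhalf j hj
    have hx2 : n * 2 ^ j / w ≤ 1 / 2 := by
      refine hx.trans ?_
      rw [div_le_div_iff₀ hsC0 two_pos]
      linarith
    have hx0 : 0 ≤ n * 2 ^ j / w := by positivity
    have hd : (1 : ℝ) / 2 ≤ 1 - n * 2 ^ j / w := by linarith
    have h1 : 2 * n ^ 2 * ((2 : ℝ) ^ j / w) ^ 2 / (1 - n * (2 : ℝ) ^ j / w)
        ≤ 4 * (n * 2 ^ j / w) ^ 2 := by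
      rw [div_le_iff₀ (by linarith)]
      have : 2 * n ^ 2 * ((2 : ℝ) ^ j / w) ^ 2 = 2 * (n * 2 ^ j / w) ^ 2 := by
        field_simp
      rw [this]
      nlinarith [sq_nonneg (n * 2 ^ j / w)]
    refine h1.trans ?_
    have : 4 * (n * 2 ^ j / w) ^ 2 = 4 * (n * 2 ^ j / w) * (n * 2 ^ j / w) := by ring
    rw [this, show 4 / Real.sqrt C * (n * 2 ^ j / w)
        = 4 * (1 / Real.sqrt C) * (n * 2 ^ j / w) by ring]
    have h4 : 0 ≤ (4 : ℝ) * (n * 2 ^ j / w) := by positivity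
    nlinarith
  refine (Finset.sum_le_sum hterm).trans ?_
  have hsum : ∑ j ∈ Finset.range (N + 1), 4 / Real.sqrt C * (n * 2 ^ j / w)
      = 4 / Real.sqrt C * (n / w) * (2 ^ (N + 1) - 1) := by
    rw [← Finset.mul_sum]
    have : ∑ j ∈ Finset.range (N + 1), n * (2 : ℝ) ^ j / w
        = (n / w) * ∑ j ∈ Finset.range (N + 1), (2 : ℝ) ^ j := by
      rw [Finset.mul_sum]; exact Finset.sum_congr rfl fun j _ => by ring
    rw [this, geom_sum_eq (by norm_num)]
    ring_nf
  rw [hsum]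
  have hCeq : Real.sqrt C * Real.sqrt C = C := Real.mul_self_sqrt hC0.le
  have h5 : 4 / Real.sqrt C * (n / w) * (2 ^ (N + 1) - 1)
      ≤ 4 / Real.sqrt C * (n / w) * (2 * 2 ^ N) := by
    have : ((2 : ℝ) ^ (N + 1) - 1) ≤ 2 * 2 ^ N := by
      rw [pow_succ]; nlinarith [pow_pos (two_pos (α := ℝ)) N]
    gcongr
  refine h5.trans ?_
  have h6 : 4 / Real.sqrt C * (n / w) * (2 * 2 ^ N)
      = 8 / Real.sqrt C * (n * 2 ^ N / w) := by field_simp; ring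
  rw [h6]
  have h7 : 8 / Real.sqrt C * (n * 2 ^ N / w) ≤ 8 / Real.sqrt C * (1 / Real.sqrt C) := by
    gcongr
  refine h7.trans ?_
  rw [div_mul_div_comm, hCeq, mul_one]
end

section
/- Consider a fair algorithm running for λ slots with per-slot sending probabilities p(1), …, p(λ) ∈ [0, 1/2], executed by n packets independently. If the total contention TC = n·∑_{i=1}^λ p(i) < 2, then the probability that no slot ever contains exactly one sender (i.e., the algorithm never succeeds) is at least e^{-4} (assuming a single fixed packet fails with probability at least ∏(1 - p(i)) and packets' failures are treated independently so all-fail probability is at least (e^{-2·TC/n})^n). -/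
lemma exp_neg_two_le (x : ℝ) (hx : x ∈ Set.Icc (0:ℝ) (1/2)) :
    Real.exp (-(2*x)) ≤ 1 - x := by
  obtain ⟨h0, h1⟩ := hx
  have h2 : (1:ℝ) + 2*x ≤ Real.exp (2*x) := by
    have := Real.add_one_le_exp (2*x); linarith
  have hpos : (0:ℝ) < 1 + 2*x := by linarith
  have hinv : Real.exp (-(2*x)) ≤ 1 / (1 + 2*x) := by
    rw [Real.exp_neg, one_div]
    exact inv_anti₀ hpos h2
  have : 1 / (1 + 2*x) ≤ 1 - x := by
    rw [div_le_iff₀ hpos]; nlinarith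
  calc Real.exp (-(2*x)) ≤ 1 / (1+2*x) := hinv
    _ ≤ 1 - x := this

/-- A fair algorithm with total contention `TC = n · ∑ p(i) < 2` fails with
constant probability: the probability that every one of the `n` packets fails in
every slot, which is at least `(∏ (1 - p i))^n`, is at least `e^{-4}`. -/
theorem low_contention_constant_failure (lam n : ℕ) (p : ℕ → ℝ) (hn : 1 ≤ n)
    (hp : ∀ i ∈ Finset.range lam, p i ∈ Set.Icc (0 : ℝ) (1 / 2))
    (hTC : (n : ℝ) * ∑ i ∈ Finset.range lam, p i < 2) :
    Real.exp (-4) ≤ (∏ i ∈ Finset.range lam, (1 - p i)) ^ n := by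
  set S := ∑ i ∈ Finset.range lam, p i with hS
  have hprod : Real.exp (-(2*S)) ≤ ∏ i ∈ Finset.range lam, (1 - p i) := by
    have : ∏ i ∈ Finset.range lam, Real.exp (-(2 * p i)) ≤
        ∏ i ∈ Finset.range lam, (1 - p i) :=
      Finset.prod_le_prod (fun i _ => (Real.exp_pos _).le)
        (fun i hi => exp_neg_two_le _ (hp i hi))
    have hsum : ∑ x ∈ Finset.range lam, -(2 * p x) = -(2*S) := by
      simp [hS, Finset.mul_sum]
    rwa [← Real.exp_sum, hsum] at this
  have hbase : Real.exp (-(2*S)) ^ n ≤ (∏ i ∈ Finset.range lam, (1 - p i)) ^ n :=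
    pow_le_pow_left₀ (Real.exp_pos _).le hprod n
  refine le_trans ?_ hbase
  rw [← Real.exp_nat_mul]
  apply Real.exp_le_exp.2
  have hn' : (0:ℝ) < n := by exact_mod_cast hn
  nlinarith
end
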